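/- If a seminorm q on a locally convex algebra A satisfies p(x₁⋯xₙ) ≤ q(x₁)⋯q(xₙ) for all n ≥ m (for some fixed m) and all xᵢ ∈ A, and the multiplication is continuous, then there exists a continuous seminorm q' with p(x₁⋯xₙ) ≤ q'(x₁)⋯q'(xₙ) for all n ≥ 1. Concretely, one can take q' = max{p, q^(2), …, q^(m−1), q} where each q^(i) controls i-fold products. -/

import Mathlib

private lemma prod_map_nonneg' {A : Type*} [Ring A] [Algebra ℂ A] (f : Seminorm ℂ A)
    (l : List A) : 0 ≤ (l.map f).prod := by
  induction l with
  | nil => simp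
  | cons a t ih =>
    simp only [List.map_cons, List.prod_cons]
    exact mul_nonneg (apply_nonneg f a) ih

private lemma prod_map_mono' {A : Type*} [Ring A] [Algebra ℂ A] (f g : Seminorm ℂ A)
    (h : ∀ x, f x ≤ g x) (l : List A) : (l.map f).prod ≤ (l.map g).prod := by
  induction l with
  | nil => simp
  | cons a t ih =>
    simp only [List.map_cons, List.prod_cons]
    exact mul_le_mul (h a) ih (prod_map_nonneg' f t) (apply_nonneg g a)

/-- If a continuous seminorm `q` satisfies `p(x₁⋯xₙ) ≤ q(x₁)⋯q(xₙ)` for all `n ≥ m`, and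
multiplication is continuous (so each `i`-fold product with `2 ≤ i < m` is controlled by
some continuous seminorm `qᵢ`), then there is a continuous seminorm `q'` with
`p(x₁⋯xₙ) ≤ q'(x₁)⋯q'(xₙ)` for all `n ≥ 1`.  The set `P` models the continuous seminorms;
it is closed under binary maxima. -/
theorem stmt3 {A : Type*} [Ring A] [Algebra ℂ A] (P : Set (Seminorm ℂ A))
    (hmax : ∀ f ∈ P, ∀ g ∈ P, f ⊔ g ∈ P)
    (p q : Seminorm ℂ A) (hp : p ∈ P) (hq : q ∈ P) (m : ℕ)
    (hqm : ∀ l : List A, m ≤ l.length → p l.prod ≤ (l.map q).prod)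
    (hcont : ∀ i : ℕ, 2 ≤ i → i < m →
      ∃ qi ∈ P, ∀ l : List A, l.length = i → p l.prod ≤ (l.map qi).prod) :
    ∃ q' ∈ P, ∀ l : List A, 1 ≤ l.length → p l.prod ≤ (l.map q').prod := by
  have hch : ∀ i : ℕ, ∃ qi : Seminorm ℂ A, qi ∈ P ∧
      (2 ≤ i → i < m → ∀ l : List A, l.length = i → p l.prod ≤ (l.map qi).prod) := by
    intro i
    by_cases h2 : 2 ≤ i
    · by_cases hm : i < m
      · obtain ⟨qi, hqi, hqi2⟩ := hcont i h2 hm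
        exact ⟨qi, hqi, fun _ _ => hqi2⟩
      · exact ⟨p, hp, fun _ h => absurd h hm⟩
    · exact ⟨p, hp, fun h => absurd h h2⟩
  choose Q hQP hQ using hch
  set q' : Seminorm ℂ A := (List.range m).foldr (fun i acc => Q i ⊔ acc) (p ⊔ q) with hq'
  have hmem : ∀ L : List ℕ, (L.foldr (fun i acc => Q i ⊔ acc) (p ⊔ q)) ∈ P := by
    intro L
    induction L with
    | nil => exact hmax p hp q hq
    | cons i t ih => exact hmax _ (hQP i) _ ih
  have hbase : ∀ L : List ℕ, ∀ x,
      (p ⊔ q) x ≤ (L.foldr (fun i acc => Q i ⊔ acc) (p ⊔ q)) x := by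
    intro L x
    induction L with
    | nil => exact le_refl _
    | cons i t ih => exact le_trans ih (le_max_right _ _)
  have hQle : ∀ L : List ℕ, ∀ i ∈ L, ∀ x,
      Q i x ≤ (L.foldr (fun j acc => Q j ⊔ acc) (p ⊔ q)) x := by
    intro L
    induction L with
    | nil => intro i hi; exact absurd hi List.not_mem_nil
    | cons j t ih =>
      intro i hi x
      rcases List.mem_cons.mp hi with h | h
      · subst h; exact le_max_left _ _
      · exact le_trans (ih i h x) (le_max_right _ _)
  have hple : ∀ x, p x ≤ q' x := fun x =>
    le_trans (le_max_left _ _) (hbase (List.range m) x)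
  have hqle : ∀ x, q x ≤ q' x := fun x =>
    le_trans (le_max_right _ _) (hbase (List.range m) x)
  refine ⟨q', hmem _, ?_⟩
  intro l hl
  by_cases hm : m ≤ l.length
  · exact le_trans (hqm l hm) (prod_map_mono' q q' hqle l)
  · push_neg at hm
    by_cases h1 : l.length = 1
    · obtain ⟨x, hx⟩ := List.length_eq_one_iff.mp h1
      subst hx
      simpa using hple x
    · have h2 : 2 ≤ l.length := by omega
      have := hQ l.length h2 hm l rfl
      refine le_trans this (prod_map_mono' (Q l.length) q' ?_ l)
      exact hQle (List.range m) l.length (List.mem_range.mpr hm)
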